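/- arXiv:1004.4953 — 8 statements merged into one kernel-verified Lean document; each statement's English description precedes it below -/
import Mathlib

section
/- Let m ≥ 3 and n ≥ 1, and let A be the diagonal order-m tensor of format n×⋯×n defined by a_{i i … i} = 1 for all i and all other entries zero. Then the set of equivalence classes of eigenpairs of A is finite and has exactly ((m-1)^n - 1)/(m-2) elements. -/
open Finset

/-- The contraction `A x^{m-1}` of an order-`m` tensor of format `n × ⋯ × n`
with the vector `x ∈ ℂⁿ`. -/
noncomputable def tApply (m n : ℕ) (A : (Fin m → Fin n) → ℂ) (x : Fin n → ℂ) :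
    Fin n → ℂ :=
  fun j => ∑ i : Fin (m - 1) → Fin n,
    A (fun k => if hk : (k : ℕ) = 0 then j
        else i ⟨(k : ℕ) - 1, by have := k.isLt; omega⟩) * ∏ l, x (i l)

/-- `(λ, x)` is an eigenpair of `A` : `x ≠ 0` and `A x^{m-1} = λ x`. -/
def IsEigenpair (m n : ℕ) (A : (Fin m → Fin n) → ℂ) (p : ℂ × (Fin n → ℂ)) : Prop :=
  p.2 ≠ 0 ∧ tApply m n A p.2 = p.1 • p.2

/-- Equivalence of eigenpairs. -/
def EigEquiv (m n : ℕ) (p q : ℂ × (Fin n → ℂ)) : Prop :=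
  ∃ t : ℂ, t ≠ 0 ∧ t ^ (m - 2) * p.1 = q.1 ∧ t • p.2 = q.2

/-- The set (type) of equivalence classes of eigenpairs of the tensor `A`. -/
def EigClasses (m n : ℕ) (A : (Fin m → Fin n) → ℂ) : Type :=
  Quot (fun p q : {p : ℂ × (Fin n → ℂ) // IsEigenpair m n A p} => EigEquiv m n p.1 q.1)

/-- The diagonal tensor with `a_{i i ⋯ i} = 1` and all other entries `0`. -/
noncomputable def diagTensor (m n : ℕ) : (Fin m → Fin n) → ℂ :=
  fun i => if ∀ k l, i k = i l then 1 else 0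

/- ### Auxiliary material -/

/-- The concrete type used to enumerate the eigenpair classes: the position of
the first nonzero entry, together with arbitrary data (zero, or one of `d`
roots of unity) at the later positions. -/
abbrev EigS (n d : ℕ) : Type := Σ j : Fin n, ({k : Fin n // j < k} → Fin (d + 1))

/-- Encode a complex number which is `0` or a `d`-th root of unity as an
element of `Fin (d+1)`. -/
noncomputable def enc (d : ℕ) (ζ : ℂ) (z : ℂ) : Fin (d + 1) :=
  if h : ∃ k, k < d ∧ ζ ^ k = z then
    ⟨h.choose + 1, by have := h.choose_spec.1; omega⟩
  else 0

/-- Decode an element of `EigS n d` into a vector in `ℂⁿ`. -/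
noncomputable def decodeVec (n d : ℕ) (ζ : ℂ) (s : EigS n d) : Fin n → ℂ :=
  fun k =>
    if h : s.1 < k then
      (if s.2 ⟨k, h⟩ = 0 then 0 else ζ ^ ((s.2 ⟨k, h⟩ : ℕ) - 1))
    else if k = s.1 then 1 else 0

lemma filter_ne_nonempty {n : ℕ} {x : Fin n → ℂ} (hx : x ≠ 0) :
    (univ.filter (fun j => x j ≠ 0)).Nonempty := by
  obtain ⟨j, hj⟩ := Function.ne_iff.mp hx
  exact ⟨j, mem_filter.mpr ⟨mem_univ _, hj⟩⟩

/-- The first index where a nonzero vector is nonzero. -/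
noncomputable def supMin {n : ℕ} (x : Fin n → ℂ) (hx : x ≠ 0) : Fin n :=
  (univ.filter (fun j => x j ≠ 0)).min' (filter_ne_nonempty hx)

/-- Encode a nonzero vector. -/
noncomputable def encodeVec (n d : ℕ) (ζ : ℂ) (x : Fin n → ℂ) (hx : x ≠ 0) :
    EigS n d :=
  ⟨supMin x hx, fun k => enc d ζ (x (k : Fin n) / x (supMin x hx))⟩

section Lemmas

variable {n d : ℕ} {ζ : ℂ}

lemma supMin_ne_zero {x : Fin n → ℂ} (hx : x ≠ 0) : x (supMin x hx) ≠ 0 := by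
  have h : supMin x hx ∈ univ.filter (fun j => x j ≠ 0) :=
    Finset.min'_mem (univ.filter (fun j => x j ≠ 0)) (filter_ne_nonempty hx)
  exact (mem_filter.mp h).2

lemma supMin_le {x : Fin n → ℂ} (hx : x ≠ 0) {k : Fin n} (hk : x k ≠ 0) :
    supMin x hx ≤ k :=
  Finset.min'_le (univ.filter (fun j => x j ≠ 0)) k (mem_filter.mpr ⟨mem_univ _, hk⟩)

lemma eq_zero_of_lt_supMin {x : Fin n → ℂ} (hx : x ≠ 0) {k : Fin n}
    (hk : k < supMin x hx) : x k = 0 := by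
  by_contra h
  exact absurd (supMin_le hx h) (not_le.mpr hk)

lemma supMin_eq {x : Fin n → ℂ} (hx : x ≠ 0) {j : Fin n} (hj : x j ≠ 0)
    (hj' : ∀ k, k < j → x k = 0) : supMin x hx = j := by
  refine le_antisymm (supMin_le hx hj) ?_
  by_contra h
  exact supMin_ne_zero hx (hj' _ (not_le.mp h))

lemma enc_zero (hζ : IsPrimitiveRoot ζ d) (hd : 0 < d) : enc d ζ 0 = 0 := by
  unfold enc
  rw [dif_neg]
  rintro ⟨k, -, hk⟩
  exact pow_ne_zero k (hζ.ne_zero hd.ne') hk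

lemma enc_spec (hζ : IsPrimitiveRoot ζ d) (hd : 0 < d) {z : ℂ} (hz : z ^ d = 1) :
    enc d ζ z ≠ 0 ∧ ζ ^ ((enc d ζ z : ℕ) - 1) = z := by
  haveI : NeZero d := ⟨hd.ne'⟩
  obtain ⟨i, hid, hiz⟩ := hζ.eq_pow_of_pow_eq_one hz
  have hex : ∃ k, k < d ∧ ζ ^ k = z := ⟨i, hid, hiz⟩
  unfold enc
  rw [dif_pos hex]
  refine ⟨?_, ?_⟩
  · refine Fin.ne_of_val_ne ?_
    simp
  · show ζ ^ (hex.choose + 1 - 1) = z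
    simpa using hex.choose_spec.2

lemma enc_pow (hζ : IsPrimitiveRoot ζ d) (a : Fin (d + 1)) (ha : a ≠ 0) :
    enc d ζ (ζ ^ ((a : ℕ) - 1)) = a := by
  have ha' : 0 < (a : ℕ) := by
    rcases Nat.eq_zero_or_pos (a : ℕ) with h | h
    · exact absurd (Fin.ext (by simp [h])) ha
    · exact h
  have h1 : (a : ℕ) - 1 < d := by have := a.isLt; omega
  have hex : ∃ k, k < d ∧ ζ ^ k = ζ ^ ((a : ℕ) - 1) := ⟨_, h1, rfl⟩
  unfold enc
  rw [dif_pos hex]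
  have h2 := hex.choose_spec
  have h3 := hζ.pow_inj h2.1 h1 h2.2
  apply Fin.ext
  show hex.choose + 1 = (a : ℕ)
  omega

lemma encodeVec_eq {x : Fin n → ℂ} (hx : x ≠ 0) (j : Fin n)
    (f : {k : Fin n // j < k} → Fin (d + 1))
    (h1 : supMin x hx = j)
    (h2 : ∀ (k : Fin n) (hk : j < k), enc d ζ (x k / x j) = f ⟨k, hk⟩) :
    encodeVec n d ζ x hx = ⟨j, f⟩ := by
  subst h1
  unfold encodeVec
  congr 1
  funext k
  exact h2 k.1 k.2

lemma decodeVec_root (hζ : IsPrimitiveRoot ζ d) (s : EigS n d) (k : Fin n) :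
    decodeVec n d ζ s k = 0 ∨ (decodeVec n d ζ s k) ^ d = 1 := by
  unfold decodeVec
  split
  · split
    · exact Or.inl rfl
    · right
      rw [← pow_mul, mul_comm, pow_mul, hζ.pow_eq_one, one_pow]
  · split
    · right; simp
    · exact Or.inl rfl

lemma decodeVec_self (s : EigS n d) : decodeVec n d ζ s s.1 = 1 := by
  unfold decodeVec
  rw [dif_neg (lt_irrefl _), if_pos rfl]

lemma decodeVec_ne_zero (s : EigS n d) : decodeVec n d ζ s ≠ 0 := by
  intro h
  have := congrFun h s.1
  rw [decodeVec_self] at this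
  exact one_ne_zero this

lemma decodeVec_supMin (s : EigS n d) :
    supMin (decodeVec n d ζ s) (decodeVec_ne_zero s) = s.1 := by
  refine supMin_eq _ (by rw [decodeVec_self]; exact one_ne_zero) ?_
  intro k hk
  unfold decodeVec
  rw [dif_neg (by exact fun h => absurd (lt_trans hk h) (lt_irrefl _)),
    if_neg (ne_of_lt hk)]

end Lemmas

/-- The root of unity used in the construction. -/
noncomputable def zetam (d : ℕ) : ℂ := Complex.exp (2 * Real.pi * Complex.I / d)

lemma zetam_prim {d : ℕ} (hd : 0 < d) : IsPrimitiveRoot (zetam d) d :=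
  Complex.isPrimitiveRoot_exp d hd.ne'

lemma tApply_diag (m n : ℕ) (hm : 3 ≤ m) (x : Fin n → ℂ) (j : Fin n) :
    tApply m n (diagTensor m n) x j = x j ^ (m - 1) := by
  unfold tApply diagTensor
  rw [Finset.sum_eq_single (fun _ => j)]
  · rw [if_pos, one_mul, Finset.prod_const, Finset.card_univ, Fintype.card_fin]
    intro k l
    dsimp only
    split <;> split <;> rfl
  · intro i _ hi
    rw [if_neg, zero_mul]
    intro hconst
    apply hi
    funext l
    have h0 : ((⟨0, by omega⟩ : Fin m) : ℕ) = 0 := rfl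
    have hl : (((⟨(l : ℕ) + 1, by have := l.isLt; omega⟩ : Fin m)) : ℕ) ≠ 0 := by
      simp
    have := hconst ⟨(l : ℕ) + 1, by have := l.isLt; omega⟩ ⟨0, by omega⟩
    beta_reduce at this
    rw [dif_neg hl, dif_pos h0] at this
    convert this using 2
    all_goals exact (Fin.ext (by simp)).symm
  · intro h
    exact absurd (mem_univ _) h

lemma isEigen_diag_iff (m n : ℕ) (hm : 3 ≤ m) (p : ℂ × (Fin n → ℂ)) :
    IsEigenpair m n (diagTensor m n) p ↔
      p.2 ≠ 0 ∧ ∀ j, p.2 j ^ (m - 1) = p.1 * p.2 j := by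
  unfold IsEigenpair
  refine and_congr_right fun _ => ?_
  constructor
  · intro h j
    have := congrFun h j
    rwa [tApply_diag m n hm] at this
  · intro h
    funext j
    rw [tApply_diag m n hm]
    exact h j

lemma eigen_pow_eq {m n : ℕ} (hm : 3 ≤ m) {lam : ℂ} {x : Fin n → ℂ}
    (h : ∀ j, x j ^ (m - 1) = lam * x j) {j : Fin n} (hj : x j ≠ 0) :
    x j ^ (m - 2) = lam := by
  have hm1 : m - 1 = (m - 2) + 1 := by omega
  have := h j
  rw [hm1, pow_succ] at this
  exact mul_right_cancel₀ hj this

/-- The decoded eigenpair. -/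
noncomputable def decodePair (m n : ℕ) (s : EigS n (m - 2)) : ℂ × (Fin n → ℂ) :=
  (1, decodeVec n (m - 2) (zetam (m - 2)) s)

lemma decodePair_eigen (m n : ℕ) (hm : 3 ≤ m) (s : EigS n (m - 2)) :
    IsEigenpair m n (diagTensor m n) (decodePair m n s) := by
  have hd : 0 < m - 2 := by omega
  rw [isEigen_diag_iff m n hm]
  refine ⟨decodeVec_ne_zero s, fun j => ?_⟩
  rcases decodeVec_root (zetam_prim hd) s j with h | h
  · rw [decodePair]
    dsimp only
    rw [h, one_mul, zero_pow (by omega)]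
  · rw [decodePair]
    dsimp only
    rw [one_mul]
    have hm1 : m - 1 = (m - 2) + 1 := by omega
    rw [hm1, pow_succ, h, one_mul]

lemma encode_welldef (m n : ℕ) (hm : 3 ≤ m)
    (p q : {p : ℂ × (Fin n → ℂ) // IsEigenpair m n (diagTensor m n) p})
    (h : EigEquiv m n p.1 q.1) :
    encodeVec n (m - 2) (zetam (m - 2)) p.1.2 p.2.1 =
      encodeVec n (m - 2) (zetam (m - 2)) q.1.2 q.2.1 := by
  obtain ⟨t, ht, -, hx⟩ := h
  set x := p.1.2 with hxdef
  have hx' : q.1.2 = fun k => t * x k := by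
    rw [← hx]; rfl
  refine Eq.symm (Eq.symm ?_)
  refine Eq.symm (encodeVec_eq (ζ := zetam (m - 2)) q.2.1 (supMin x p.2.1)
    (fun k => enc (m - 2) (zetam (m - 2)) (x (k : Fin n) / x (supMin x p.2.1))) ?_ ?_)
  · refine supMin_eq _ ?_ ?_
    · rw [hx']
      exact mul_ne_zero ht (supMin_ne_zero p.2.1)
    · intro k hk
      rw [hx']
      dsimp only
      have hk0 : x k = 0 := eq_zero_of_lt_supMin p.2.1 hk
      rw [hk0, mul_zero]
  · intro k hk
    rw [hx']
    dsimp only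
    rw [mul_div_mul_left _ _ ht]

lemma decode_encode (m n : ℕ) (hm : 3 ≤ m) (s : EigS n (m - 2))
    (hx : decodeVec n (m - 2) (zetam (m - 2)) s ≠ 0) :
    encodeVec n (m - 2) (zetam (m - 2)) (decodeVec n (m - 2) (zetam (m - 2)) s) hx
      = s := by
  have hd : 0 < m - 2 := by omega
  have hζ := zetam_prim hd
  obtain ⟨j, f⟩ := s
  refine encodeVec_eq hx j f (decodeVec_supMin _) ?_
  intro k hk
  have hj1 : decodeVec n (m - 2) (zetam (m - 2)) ⟨j, f⟩ j = 1 := decodeVec_self _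
  rw [hj1, div_one]
  show enc (m - 2) (zetam (m - 2)) (decodeVec n (m - 2) (zetam (m - 2)) ⟨j, f⟩ k) = _
  unfold decodeVec
  rw [dif_pos hk]
  dsimp only
  by_cases h0 : f ⟨k, hk⟩ = 0
  · rw [if_pos h0, enc_zero hζ hd, h0]
  · rw [if_neg h0, enc_pow hζ _ h0]

lemma equiv_decode_encode (m n : ℕ) (hm : 3 ≤ m)
    (p : {p : ℂ × (Fin n → ℂ) // IsEigenpair m n (diagTensor m n) p}) :
    EigEquiv m n
      (decodePair m n (encodeVec n (m - 2) (zetam (m - 2)) p.1.2 p.2.1)) p.1 := by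
  have hd : 0 < m - 2 := by omega
  have hζ := zetam_prim hd
  obtain ⟨⟨lam, x⟩, hp⟩ := p
  have hpow : ∀ j, x j ^ (m - 1) = lam * x j :=
    ((isEigen_diag_iff m n hm _).mp hp).2
  dsimp only at *
  have hx : x ≠ 0 := hp.1
  set j0 := supMin x hx with hj0
  have hxj0 : x j0 ≠ 0 := supMin_ne_zero hx
  have hlam : x j0 ^ (m - 2) = lam := eigen_pow_eq hm hpow hxj0
  refine ⟨x j0, hxj0, ?_, ?_⟩
  · rw [decodePair]
    dsimp only
    rw [mul_one, hlam]
  · rw [decodePair]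
    dsimp only
    funext k
    rw [Pi.smul_apply, smul_eq_mul]
    show x j0 * decodeVec n (m - 2) (zetam (m - 2))
      ⟨j0, fun k => enc (m - 2) (zetam (m - 2)) (x k / x j0)⟩ k = x k
    unfold decodeVec
    dsimp only
    by_cases h : j0 < k
    · rw [dif_pos h]
      by_cases hk0 : x k = 0
      · rw [if_pos, mul_zero, hk0]
        rw [hk0, zero_div, enc_zero hζ hd]
      · have hz : (x k / x j0) ^ (m - 2) = 1 := by
          rw [div_pow, hlam, eigen_pow_eq hm hpow hk0, div_self (by rw [← hlam]; exact pow_ne_zero _ hxj0)]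
        obtain ⟨he1, he2⟩ := enc_spec hζ hd hz
        rw [if_neg he1, he2, mul_div_cancel₀ _ hxj0]
    · rw [dif_neg h]
      by_cases hk : k = j0
      · rw [if_pos hk, mul_one, hk]
      · rw [if_neg hk, mul_zero]
        exact (eq_zero_of_lt_supMin hx (lt_of_le_of_ne (not_lt.mp h) hk)).symm

/-- The equivalence between eigenpair classes and the concrete type. -/
noncomputable def eigEquivS (m n : ℕ) (hm : 3 ≤ m) :
    EigClasses m n (diagTensor m n) ≃ EigS n (m - 2) where
  toFun := Quot.lift
    (fun p => encodeVec n (m - 2) (zetam (m - 2)) p.1.2 p.2.1)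
    (encode_welldef m n hm)
  invFun := fun s => Quot.mk _ ⟨decodePair m n s, decodePair_eigen m n hm s⟩
  left_inv := by
    apply Quot.ind
    intro p
    exact Quot.sound (equiv_decode_encode m n hm p)
  right_inv := fun s => decode_encode m n hm s _

lemma card_EigS (n d : ℕ) : Nat.card (EigS n d) = ∑ i ∈ range n, (d + 1) ^ i := by
  rw [Nat.card_eq_fintype_card, Fintype.card_sigma]
  have hcard : ∀ j : Fin n,
      Fintype.card ({k : Fin n // j < k} → Fin (d + 1)) = (d + 1) ^ (n - 1 - (j : ℕ)) := by
    intro j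
    rw [Fintype.card_fun, Fintype.card_fin]
    congr 1
    have : Fintype.card {k : Fin n // j < k} = (Finset.Ioi j).card := by
      rw [Fintype.card_subtype]
      congr 1
      ext k
      simp [Finset.mem_Ioi]
    rw [this, Fin.card_Ioi]
  calc ∑ j : Fin n, Fintype.card ({k : Fin n // j < k} → Fin (d + 1))
      = ∑ j : Fin n, (fun i => (d + 1) ^ (n - 1 - i)) (j : ℕ) :=
        Finset.sum_congr rfl (fun j _ => hcard j)
    _ = ∑ i ∈ range n, (d + 1) ^ (n - 1 - i) :=
        Fin.sum_univ_eq_sum_range (fun i => (d + 1) ^ (n - 1 - i)) n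
    _ = ∑ i ∈ range n, (d + 1) ^ i := Finset.sum_range_reflect _ n

/-- The diagonal tensor has exactly `((m-1)^n - 1)/(m-2)` equivalence classes
of eigenpairs. -/
theorem diag_eigenpair_classes_card (m n : ℕ) (hm : 3 ≤ m) (hn : 1 ≤ n) :
    Finite (EigClasses m n (diagTensor m n)) ∧
      Nat.card (EigClasses m n (diagTensor m n)) = ((m - 1) ^ n - 1) / (m - 2) := by
  have e := eigEquivS m n hm
  constructor
  · exact Finite.of_equiv _ e.symm
  · rw [Nat.card_congr e, card_EigS]
    have h1 : (m - 2) + 1 = m - 1 := by omega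
    rw [h1, Nat.geomSum_eq (by omega) n]
    have h2 : m - 1 - 1 = m - 2 := by omega
    rw [h2]
end

section
/- Consider the complex 2×2×2 tensor A whose nonzero entries are a₁₁₁ = a₂₂₁ = 1 and a₁₁₂ = a₂₂₂ = i, so that Ax² = (x₁² + i x₁x₂, x₁x₂ + i x₂²). Then: (1) for every complex number λ ≠ 0, there exists x ∈ ℂ² with x₁² + i x₁x₂ = λx₁, x₁x₂ + i x₂² = λx₂, and x₁² + x₂² = 1 (indeed x = ((λ²+1)/(2λ), (λ²−1)/(2iλ)) works); and (2) there is no x ∈ ℂ² with x₁² + i x₁x₂ = 0, x₁x₂ + i x₂² = 0, and x₁² + x₂² = 1. Hence the set of normalized eigenvalues of A is ℂ \ {0}, which is neither finite nor all of ℂ. -/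
open Complex

/-- The set of normalized eigenvalues of the `2×2×2` tensor `A` with
`Ax² = (x₁² + i x₁x₂, x₁x₂ + i x₂²)`. -/
def normEigSet : Set ℂ :=
  {lam : ℂ | ∃ x₁ x₂ : ℂ,
    x₁ ^ 2 + I * x₁ * x₂ = lam * x₁ ∧
    x₁ * x₂ + I * x₂ ^ 2 = lam * x₂ ∧
    x₁ ^ 2 + x₂ ^ 2 = 1}

lemma zero_not_eig :
    ¬ ∃ x₁ x₂ : ℂ,
      x₁ ^ 2 + I * x₁ * x₂ = 0 ∧ x₁ * x₂ + I * x₂ ^ 2 = 0 ∧ x₁ ^ 2 + x₂ ^ 2 = 1 := by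
  rintro ⟨x₁, x₂, h1, h2, h3⟩
  have f1 : x₁ * (x₁ + I * x₂) = 0 := by linear_combination h1
  rcases mul_eq_zero.1 f1 with h | h
  · -- x₁ = 0 : then I * x₂² = 0 so x₂ = 0, contradicting h3
    have hx2 : x₂ ^ 2 = 0 := by
      have : I * x₂ ^ 2 = 0 := by rw [h] at h2; linear_combination h2
      exact (mul_eq_zero.1 this).resolve_left Complex.I_ne_zero
    rw [h, hx2] at h3; norm_num at h3
  · -- x₁ = -I x₂ : then x₁² + x₂² = 0, contradicting h3
    have hx1 : x₁ = -(I * x₂) := by linear_combination h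
    rw [hx1] at h3
    have h0 : (-(I * x₂)) ^ 2 + x₂ ^ 2 = 0 := by
      linear_combination (x₂ ^ 2) * Complex.I_sq
    rw [h0] at h3; norm_num at h3

lemma key_eig (lam : ℂ) (hlam : lam ≠ 0) :
    ((lam ^ 2 + 1) / (2 * lam)) ^ 2
        + I * ((lam ^ 2 + 1) / (2 * lam)) * ((lam ^ 2 - 1) / (2 * I * lam))
        = lam * ((lam ^ 2 + 1) / (2 * lam)) ∧
      ((lam ^ 2 + 1) / (2 * lam)) * ((lam ^ 2 - 1) / (2 * I * lam))
        + I * ((lam ^ 2 - 1) / (2 * I * lam)) ^ 2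
        = lam * ((lam ^ 2 - 1) / (2 * I * lam)) ∧
      ((lam ^ 2 + 1) / (2 * lam)) ^ 2 + ((lam ^ 2 - 1) / (2 * I * lam)) ^ 2 = 1 := by
  have hI := Complex.I_ne_zero
  refine ⟨?_, ?_, ?_⟩
  · field_simp
    ring
  · field_simp
    ring
  · field_simp
    linear_combination (4 * lam ^ 2 * (lam ^ 2 + 1) ^ 2 - 16 * lam ^ 4 + (1 - 6 * lam ^ 2 + 9 * lam ^ 4 - 4 * lam ^ 6)) * Complex.I_sq

/-- For the `2×2×2` tensor with `Ax² = (x₁² + i x₁x₂, x₁x₂ + i x₂²)`: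
every `λ ≠ 0` is a normalized eigenvalue (with eigenvector
`((λ²+1)/(2λ), (λ²−1)/(2iλ))`), `0` is not a normalized eigenvalue, and hence the
set of normalized eigenvalues is `ℂ \ {0}`, which is neither finite nor all of `ℂ`. -/
theorem normalized_eigenvalues_complement_zero :
    (∀ lam : ℂ, lam ≠ 0 →
      ((lam ^ 2 + 1) / (2 * lam)) ^ 2
          + I * ((lam ^ 2 + 1) / (2 * lam)) * ((lam ^ 2 - 1) / (2 * I * lam))
          = lam * ((lam ^ 2 + 1) / (2 * lam)) ∧
        ((lam ^ 2 + 1) / (2 * lam)) * ((lam ^ 2 - 1) / (2 * I * lam))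
          + I * ((lam ^ 2 - 1) / (2 * I * lam)) ^ 2
          = lam * ((lam ^ 2 - 1) / (2 * I * lam)) ∧
        ((lam ^ 2 + 1) / (2 * lam)) ^ 2 + ((lam ^ 2 - 1) / (2 * I * lam)) ^ 2 = 1) ∧
    (¬ ∃ x₁ x₂ : ℂ,
      x₁ ^ 2 + I * x₁ * x₂ = 0 ∧ x₁ * x₂ + I * x₂ ^ 2 = 0 ∧ x₁ ^ 2 + x₂ ^ 2 = 1) ∧
    normEigSet = {0}ᶜ ∧ ¬ normEigSet.Finite ∧ normEigSet ≠ Set.univ := by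
  have hset : normEigSet = {0}ᶜ := by
    ext lam
    simp only [Set.mem_compl_iff, Set.mem_singleton_iff, normEigSet, Set.mem_setOf_eq]
    constructor
    · rintro ⟨x₁, x₂, h1, h2, h3⟩ rfl
      exact zero_not_eig ⟨x₁, x₂, by simpa using h1, by simpa using h2, h3⟩
    · intro hlam
      exact ⟨_, _, key_eig lam hlam⟩
  refine ⟨key_eig, zero_not_eig, hset, ?_, ?_⟩
  · rw [hset]
    exact fun h => (Set.finite_singleton (0 : ℂ)).infinite_compl h
  · rw [hset]
    intro h
    have h0 : (0 : ℂ) ∈ ({0}ᶜ : Set ℂ) := h ▸ Set.mem_univ 0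
    simp at h0
end

section
/- Let m ≥ 2 and n ≥ 1, and let A be an order-m tensor of format n×⋯×n with complex entries. Then the set E(A) = {λ ∈ ℂ : there exists x ∈ ℂⁿ with Ax^{m-1} = λx and ∑ᵢ xᵢ² = 1} of normalized eigenvalues of A is either finite or has finite complement in ℂ. -/
set_option synthInstance.maxHeartbeats 1000000
set_option maxHeartbeats 2000000
open Finset

abbrev R0 : Type := Polynomial ℂ
abbrev KK : Type := FractionRing R0
abbrev Sn (n : ℕ) : Type := MvPolynomial (Fin n) R0
abbrev SKn (n : ℕ) : Type := MvPolynomial (Fin n) KK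

attribute [local instance] MvPolynomial.algebraMvPolynomial

theorem polyFam_finite_or_cofinite (n : ℕ) (G : Finset (MvPolynomial (Fin n) (Polynomial ℂ))) :
    {l : ℂ | ∃ x : Fin n → ℂ,
      ∀ g ∈ G, MvPolynomial.eval₂ (Polynomial.evalRingHom l) x g = 0}.Finite ∨
    {l : ℂ | ∃ x : Fin n → ℂ,
      ∀ g ∈ G, MvPolynomial.eval₂ (Polynomial.evalRingHom l) x g = 0}ᶜ.Finite := by
  classical
  by_cases hJtop : (Ideal.span ((G : Set (Sn n)))).map (algebraMap (Sn n) (SKn n)) = ⊤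
  · -- Case 1: finite
    left
    have h1 : (1 : SKn n) ∈ (Ideal.span ((G : Set (Sn n)))).map (algebraMap (Sn n) (SKn n)) :=
      hJtop ▸ Submodule.mem_top
    rw [IsLocalization.mem_map_algebraMap_iff
      ((nonZeroDivisors R0).map (MvPolynomial.C (σ := Fin n))) (SKn n)] at h1
    obtain ⟨⟨i, mm⟩, hmm⟩ := h1
    obtain ⟨d, hd, hdC⟩ := mm.2
    have hinj : Function.Injective (algebraMap (Sn n) (SKn n)) := by
      apply IsLocalization.injective (M := (nonZeroDivisors R0).map (MvPolynomial.C (σ := Fin n)))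
      rintro p ⟨d, hd, rfl⟩
      exact mem_nonZeroDivisors_of_ne_zero (by
        simpa using fun h => absurd h (nonZeroDivisors.ne_zero hd))
    have hCd : MvPolynomial.C d ∈ Ideal.span ((G : Set (Sn n))) := by
      have : algebraMap (Sn n) (SKn n) (MvPolynomial.C d) = algebraMap (Sn n) (SKn n) (i : Sn n) := by
        rw [hdC]; simpa using hmm
      rw [hinj this]; exact i.2
    have hd0 : d ≠ 0 := nonZeroDivisors.ne_zero hd
    refine Set.Finite.subset (Polynomial.finite_setOf_isRoot hd0) ?_
    rintro l ⟨x, hx⟩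
    have hker : Ideal.span ((G : Set (Sn n)))
        ≤ RingHom.ker (MvPolynomial.eval₂Hom (Polynomial.evalRingHom l) x) := by
      rw [Ideal.span_le]
      intro g hg
      exact RingHom.mem_ker.2 (by simpa using hx g (Finset.mem_coe.mp hg))
    have := hker hCd
    rw [RingHom.mem_ker, MvPolynomial.eval₂Hom_C] at this
    exact this
  · right
    obtain ⟨Mx, hMxmax, hJM⟩ := Ideal.exists_le_maximal _ hJtop
    haveI := hMxmax
    letI : Field (SKn n ⧸ Mx) := Ideal.Quotient.field Mx
    have halgKL : algebraMap KK (SKn n ⧸ Mx)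
        = (Ideal.Quotient.mk Mx).comp (MvPolynomial.C) := rfl
    haveI hIntKL : Algebra.IsIntegral KK (SKn n ⧸ Mx) := by
      constructor
      intro z
      have h := MvPolynomial.quotient_mk_comp_C_isIntegral_of_isJacobsonRing (R := KK) Mx z
      rwa [← halgKL] at h
    have hinjR0L : Function.Injective (algebraMap R0 (SKn n ⧸ Mx)) := by
      rw [IsScalarTower.algebraMap_eq R0 KK (SKn n ⧸ Mx)]
      exact (algebraMap KK (SKn n ⧸ Mx)).injective.comp (IsFractionRing.injective R0 KK)
    have hxalg : ∀ i : Fin n, IsAlgebraic R0 (Ideal.Quotient.mk Mx (MvPolynomial.X i)) := by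
      intro i
      rw [IsFractionRing.isAlgebraic_iff R0 KK (SKn n ⧸ Mx)]
      exact (Algebra.IsIntegral.isIntegral _).isAlgebraic
    choose b d hd hbd using fun i => (show ∃ (x : integralClosure R0 (SKn n ⧸ Mx)) (y : R0),
        y ≠ 0 ∧ algebraMap R0 _ y * Ideal.Quotient.mk Mx (MvPolynomial.X i) = x from by
      obtain ⟨y, hy, hint⟩ := (hxalg i).exists_integral_multiple
      exact ⟨⟨_, hint⟩, y, hy, (Algebra.smul_def _ _).symm⟩)
    have hc0 : (∏ i, d i) ≠ 0 := Finset.prod_ne_zero_iff.2 fun i _ => hd i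
    refine Set.Finite.subset (Polynomial.finite_setOf_isRoot hc0) ?_
    intro l hl
    simp only [Set.mem_compl_iff, Set.mem_setOf_eq] at hl
    by_contra hroot
    apply hl
    -- construct the common zero
    have hcu : IsUnit ((Polynomial.evalRingHom l) (∏ i, d i)) :=
      isUnit_iff_ne_zero.2 hroot
    have hcL : IsUnit (algebraMap R0 (SKn n ⧸ Mx) (∏ i, d i)) := by
      rw [isUnit_iff_ne_zero]
      intro h
      apply hc0
      apply hinjR0L
      rw [h, map_zero]
    set ψ0 : Localization.Away (∏ i, d i) →+* ℂ :=
      IsLocalization.Away.lift (∏ i, d i) hcu with hψ0def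
    set ψL : Localization.Away (∏ i, d i) →+* (SKn n ⧸ Mx) :=
      IsLocalization.Away.lift (∏ i, d i) hcL with hψLdef
    letI : Algebra (Localization.Away (∏ i, d i)) (SKn n ⧸ Mx) := ψL.toAlgebra
    haveI : IsScalarTower R0 (Localization.Away (∏ i, d i)) (SKn n ⧸ Mx) :=
      IsScalarTower.of_algebraMap_eq fun r =>
        show algebraMap R0 (SKn n ⧸ Mx) r
            = ψL (algebraMap R0 (Localization.Away (∏ i, d i)) r) from
          (IsLocalization.Away.lift_eq (∏ i, d i) hcL r).symm
    have hinjψL : ∀ a, ψL a = 0 → a = 0 := by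
      intro a ha
      obtain ⟨⟨r, s⟩, rfl⟩ := IsLocalization.mk'_surjective (Submonoid.powers (∏ i, d i)) a
      have h1 : algebraMap R0 (SKn n ⧸ Mx) r = 0 := by
        calc algebraMap R0 (SKn n ⧸ Mx) r
            = ψL (algebraMap R0 (Localization.Away (∏ i, d i)) r) :=
              (IsLocalization.Away.lift_eq (∏ i, d i) hcL r).symm
          _ = ψL (IsLocalization.mk' (Localization.Away (∏ i, d i)) r s
                * algebraMap R0 (Localization.Away (∏ i, d i)) (s : R0)) := by
              rw [IsLocalization.mk'_spec]
          _ = ψL (IsLocalization.mk' (Localization.Away (∏ i, d i)) r s)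
                * ψL (algebraMap R0 (Localization.Away (∏ i, d i)) (s : R0)) := map_mul _ _ _
          _ = 0 := by rw [ha, zero_mul]
      have : r = 0 := hinjR0L (by rwa [map_zero])
      rw [this]; exact IsLocalization.mk'_zero _
    have hXint : ∀ i : Fin n, IsIntegral (Localization.Away (∏ i, d i))
        (Ideal.Quotient.mk Mx (MvPolynomial.X i)) := by
      intro i
      have hb : IsIntegral (Localization.Away (∏ i, d i)) ((b i : SKn n ⧸ Mx)) :=
        IsIntegral.tower_top (b i).2
      have hdu : IsUnit (algebraMap R0 (Localization.Away (∏ i, d i)) (d i)) :=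
        isUnit_of_dvd_unit (map_dvd _ (Finset.dvd_prod_of_mem d (Finset.mem_univ i)))
          (IsLocalization.Away.algebraMap_isUnit (∏ i, d i))
      have h2 : algebraMap (Localization.Away (∏ i, d i)) (SKn n ⧸ Mx) (↑hdu.unit⁻¹)
          * algebraMap R0 (SKn n ⧸ Mx) (d i) = 1 := by
        rw [IsScalarTower.algebraMap_apply R0 (Localization.Away (∏ i, d i)) (SKn n ⧸ Mx) (d i),
          ← map_mul]
        rw [IsUnit.val_inv_mul hdu, map_one]
      have key : Ideal.Quotient.mk Mx (MvPolynomial.X i)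
          = algebraMap (Localization.Away (∏ i, d i)) (SKn n ⧸ Mx) (↑hdu.unit⁻¹)
            * (b i : SKn n ⧸ Mx) := by
        calc Ideal.Quotient.mk Mx (MvPolynomial.X i)
            = (algebraMap (Localization.Away (∏ i, d i)) (SKn n ⧸ Mx) (↑hdu.unit⁻¹)
              * algebraMap R0 (SKn n ⧸ Mx) (d i)) * Ideal.Quotient.mk Mx (MvPolynomial.X i) := by
              rw [h2, one_mul]
          _ = algebraMap (Localization.Away (∏ i, d i)) (SKn n ⧸ Mx) (↑hdu.unit⁻¹)
              * (algebraMap R0 (SKn n ⧸ Mx) (d i) * Ideal.Quotient.mk Mx (MvPolynomial.X i)) := by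
              ring
          _ = _ := by rw [hbd i]
      rw [key]
      exact (isIntegral_algebraMap).mul hb
    -- the evaluation at l
    have hψ0C : ∀ a : ℂ, ψ0 ((algebraMap R0 (Localization.Away (∏ i, d i))) (Polynomial.C a)) = a := by
      intro a
      rw [hψ0def, IsLocalization.Away.lift_eq]
      simp
    have hψ0surj : Function.Surjective ψ0 := fun z =>
      ⟨algebraMap R0 _ (Polynomial.C z), hψ0C z⟩
    haveI h𝔭max : (RingHom.ker ψ0).IsMaximal := RingHom.ker_isMaximal_of_surjective ψ0 hψ0surj
    have hkerle : RingHom.ker (algebraMap (Localization.Away (∏ i, d i))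
        (integralClosure (Localization.Away (∏ i, d i)) (SKn n ⧸ Mx))) ≤ RingHom.ker ψ0 := by
      intro z hz
      rw [RingHom.mem_ker] at hz
      have h0 : algebraMap (Localization.Away (∏ i, d i)) (SKn n ⧸ Mx) z = 0 := by
        have := congrArg (Subtype.val) hz
        exact this
      rw [RingHom.mem_ker, hinjψL z h0, map_zero]
    obtain ⟨q, hqmax, hqcomap⟩ := Ideal.exists_ideal_over_maximal_of_isIntegral
      (S := integralClosure (Localization.Away (∏ i, d i)) (SKn n ⧸ Mx))
      (RingHom.ker ψ0) hkerle
    haveI := hqmax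
    set χ : ℂ →+* (integralClosure (Localization.Away (∏ i, d i)) (SKn n ⧸ Mx)) ⧸ q :=
      (Ideal.Quotient.mk q).comp
        ((algebraMap (Localization.Away (∏ i, d i))
          (integralClosure (Localization.Away (∏ i, d i)) (SKn n ⧸ Mx))).comp
        ((algebraMap R0 (Localization.Away (∏ i, d i))).comp (algebraMap ℂ R0))) with hχdef
    have hkey : ∀ z, Ideal.Quotient.mk q (algebraMap (Localization.Away (∏ i, d i))
        (integralClosure (Localization.Away (∏ i, d i)) (SKn n ⧸ Mx)) z) = χ (ψ0 z) := by
      intro z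
      have hmem : z - (algebraMap R0 _ (Polynomial.C (ψ0 z))) ∈ RingHom.ker ψ0 := by
        rw [RingHom.mem_ker, map_sub, hψ0C, sub_self]
      rw [← hqcomap] at hmem
      have h0 : Ideal.Quotient.mk q (algebraMap _ _
          (z - algebraMap R0 _ (Polynomial.C (ψ0 z)))) = 0 :=
        Ideal.Quotient.eq_zero_iff_mem.2 hmem
      rw [map_sub, map_sub, sub_eq_zero] at h0
      rw [h0, hχdef]
      rfl
    have hχinj : Function.Injective χ := χ.injective
    letI : Algebra ℂ ((integralClosure (Localization.Away (∏ i, d i)) (SKn n ⧸ Mx)) ⧸ q) :=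
      χ.toAlgebra
    haveI : Algebra.IsIntegral ℂ
        ((integralClosure (Localization.Away (∏ i, d i)) (SKn n ⧸ Mx)) ⧸ q) := by
      constructor
      intro y
      obtain ⟨bb, rfl⟩ := Ideal.Quotient.mk_surjective y
      obtain ⟨p, pmonic, hp⟩ := Algebra.IsIntegral.isIntegral
        (R := Localization.Away (∏ i, d i)) bb
      refine ⟨p.map ψ0, pmonic.map _, ?_⟩
      show Polynomial.eval₂ (algebraMap ℂ _) _ (p.map ψ0) = 0
      rw [Polynomial.eval₂_map]
      have hcomp : (χ.comp ψ0) = (Ideal.Quotient.mk q).comp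
          (algebraMap (Localization.Away (∏ i, d i))
            (integralClosure (Localization.Away (∏ i, d i)) (SKn n ⧸ Mx))) :=
        RingHom.ext fun z => (hkey z).symm
      show Polynomial.eval₂ (χ.comp ψ0) (Ideal.Quotient.mk q bb) p = 0
      rw [hcomp, ← Polynomial.hom_eval₂, hp, map_zero]
    have hχsurj : Function.Surjective χ :=
      (IsAlgClosed.algebraMap_bijective_of_isIntegral
        (k := ℂ) (K := (integralClosure (Localization.Away (∏ i, d i)) (SKn n ⧸ Mx)) ⧸ q)).2
    set e := RingEquiv.ofBijective χ ⟨hχinj, hχsurj⟩ with hedef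
    set Ψ : (integralClosure (Localization.Away (∏ i, d i)) (SKn n ⧸ Mx)) →+* ℂ :=
      (e.symm : _ ≃+* ℂ).toRingHom.comp (Ideal.Quotient.mk q) with hΨdef
    have hΨspec : ∀ (bb) (a : ℂ), Ideal.Quotient.mk q bb = χ a → Ψ bb = a := by
      intro bb a h
      show e.symm (Ideal.Quotient.mk q bb) = a
      rw [h]
      exact e.symm_apply_apply a
    -- the canonical map to L
    set θ : Sn n →+* (SKn n ⧸ Mx) :=
      (Ideal.Quotient.mk Mx).comp (MvPolynomial.map (algebraMap R0 KK)) with hθdef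
    have hθC : ∀ r : R0, θ (MvPolynomial.C r) = algebraMap R0 (SKn n ⧸ Mx) r := by
      intro r
      rw [hθdef, IsScalarTower.algebraMap_apply R0 KK (SKn n ⧸ Mx), halgKL]
      simp [MvPolynomial.map_C]
    have hθmem : ∀ s : Sn n,
        θ s ∈ integralClosure (Localization.Away (∏ i, d i)) (SKn n ⧸ Mx) := by
      intro s
      induction s using MvPolynomial.induction_on with
      | C r =>
        rw [hθC, IsScalarTower.algebraMap_apply R0 (Localization.Away (∏ i, d i)) (SKn n ⧸ Mx)]
        exact Subalgebra.algebraMap_mem _ _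
      | add p1 p2 hp1 hp2 => rw [map_add]; exact add_mem hp1 hp2
      | mul_X p1 i hp1 =>
        rw [map_mul]
        refine mul_mem hp1 ?_
        have : θ (MvPolynomial.X i) = Ideal.Quotient.mk Mx (MvPolynomial.X i) := by
          rw [hθdef]; simp [MvPolynomial.map_X]
        rw [this]
        exact hXint i
    set x : Fin n → ℂ := fun i => Ψ ⟨θ (MvPolynomial.X i), hθmem _⟩ with hxdef
    have claim : ∀ s : Sn n,
        MvPolynomial.eval₂Hom (Polynomial.evalRingHom l) x s = Ψ ⟨θ s, hθmem s⟩ := by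
      intro s
      induction s using MvPolynomial.induction_on with
      | C r =>
        rw [MvPolynomial.eval₂Hom_C]
        have hsub : (⟨θ (MvPolynomial.C r), hθmem _⟩ :
            integralClosure (Localization.Away (∏ i, d i)) (SKn n ⧸ Mx))
            = algebraMap (Localization.Away (∏ i, d i)) _
              (algebraMap R0 (Localization.Away (∏ i, d i)) r) := by
          apply Subtype.ext
          show θ (MvPolynomial.C r) = _
          rw [hθC, IsScalarTower.algebraMap_apply R0 (Localization.Away (∏ i, d i)) (SKn n ⧸ Mx)]
          rfl
        rw [hsub, hΨspec _ (ψ0 (algebraMap R0 _ r)) (hkey _)]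
        rw [hψ0def, IsLocalization.Away.lift_eq]
      | add p1 p2 hp1 hp2 =>
        rw [map_add, hp1, hp2]
        have : (⟨θ (p1 + p2), hθmem _⟩ :
            integralClosure (Localization.Away (∏ i, d i)) (SKn n ⧸ Mx))
            = ⟨θ p1, hθmem _⟩ + ⟨θ p2, hθmem _⟩ := by
          apply Subtype.ext; show θ (p1 + p2) = θ p1 + θ p2; rw [map_add]
        rw [this, map_add]
      | mul_X p1 i hp1 =>
        rw [map_mul, hp1, MvPolynomial.eval₂Hom_X']
        have : (⟨θ (p1 * MvPolynomial.X i), hθmem _⟩ :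
            integralClosure (Localization.Away (∏ i, d i)) (SKn n ⧸ Mx))
            = ⟨θ p1, hθmem _⟩ * ⟨θ (MvPolynomial.X i), hθmem _⟩ := by
          apply Subtype.ext; show θ (p1 * MvPolynomial.X i) = θ p1 * θ (MvPolynomial.X i)
          rw [map_mul]
        rw [this, map_mul]
    refine ⟨x, fun g hg => ?_⟩
    have hgMx : MvPolynomial.map (algebraMap R0 KK) g ∈ Mx := by
      apply hJM
      have hmem : algebraMap (Sn n) (SKn n) g ∈
          (Ideal.span ((G : Set (Sn n)))).map (algebraMap (Sn n) (SKn n)) :=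
        Ideal.mem_map_of_mem _ (Ideal.subset_span (Finset.mem_coe.2 hg))
      exact hmem
    have hθg : θ g = 0 := by
      rw [hθdef]
      exact Ideal.Quotient.eq_zero_iff_mem.2 hgMx
    have : MvPolynomial.eval₂Hom (Polynomial.evalRingHom l) x g = 0 := by
      rw [claim g]
      have : (⟨θ g, hθmem g⟩ :
          integralClosure (Localization.Away (∏ i, d i)) (SKn n ⧸ Mx)) = 0 := by
        apply Subtype.ext; exact hθg
      rw [this, map_zero]
    exact this


noncomputable def Pj (m n : ℕ) (A : (Fin m → Fin n) → ℂ) (j : Fin n) :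
    MvPolynomial (Fin n) (Polynomial ℂ) :=
  (∑ i : Fin (m - 1) → Fin n,
    MvPolynomial.C (Polynomial.C (A (fun k => if hk : (k : ℕ) = 0 then j
        else i ⟨(k : ℕ) - 1, by have := k.isLt; omega⟩))) * ∏ l, MvPolynomial.X (i l))
  - MvPolynomial.C Polynomial.X * MvPolynomial.X j

noncomputable def Qn (n : ℕ) : MvPolynomial (Fin n) (Polynomial ℂ) :=
  (∑ i, MvPolynomial.X i ^ 2) - 1

lemma eval_Pj (m n : ℕ) (A : (Fin m → Fin n) → ℂ) (l : ℂ) (x : Fin n → ℂ) (j : Fin n) :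
    MvPolynomial.eval₂ (Polynomial.evalRingHom l) x (Pj m n A j)
      = tApply m n A x j - l * x j := by
  have : MvPolynomial.eval₂ (Polynomial.evalRingHom l) x (Pj m n A j)
      = MvPolynomial.eval₂Hom (Polynomial.evalRingHom l) x (Pj m n A j) := rfl
  rw [this, Pj, map_sub, map_sum, map_mul]
  simp [tApply]

lemma eval_Qn (n : ℕ) (l : ℂ) (x : Fin n → ℂ) :
    MvPolynomial.eval₂ (Polynomial.evalRingHom l) x (Qn n) = (∑ i, x i ^ 2) - 1 := by
  have : MvPolynomial.eval₂ (Polynomial.evalRingHom l) x (Qn n)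
      = MvPolynomial.eval₂Hom (Polynomial.evalRingHom l) x (Qn n) := rfl
  rw [this, Qn, map_sub, map_sum, map_one]
  simp

/-- The set of normalized eigenvalues of a tensor is finite or has finite
complement in `ℂ`. -/
theorem normalized_eigenvalues_finite_or_cofinite (m n : ℕ) (hm : 2 ≤ m) (hn : 1 ≤ n)
    (A : (Fin m → Fin n) → ℂ) :
    let E : Set ℂ := {lam : ℂ | ∃ x : Fin n → ℂ,
      tApply m n A x = lam • x ∧ ∑ i, x i ^ 2 = 1}
    E.Finite ∨ Eᶜ.Finite := by
  intro E
  classical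
  obtain ⟨G, hG⟩ : ∃ G : Finset (MvPolynomial (Fin n) (Polynomial ℂ)),
      ∀ l : ℂ, l ∈ E ↔ ∃ x : Fin n → ℂ,
        ∀ g ∈ G, MvPolynomial.eval₂ (Polynomial.evalRingHom l) x g = 0 := by
    refine ⟨insert (Qn n) (Finset.univ.image (Pj m n A)), fun l => ?_⟩
    constructor
    · rintro ⟨x, hx1, hx2⟩
      refine ⟨x, fun g hg => ?_⟩
      rcases Finset.mem_insert.1 hg with rfl | hg
      · rw [eval_Qn, hx2, sub_self]
      · obtain ⟨j, -, rfl⟩ := Finset.mem_image.1 hg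
        rw [eval_Pj]
        have := congrFun hx1 j
        simp only [Pi.smul_apply, smul_eq_mul] at this
        rw [this, sub_self]
    · rintro ⟨x, hx⟩
      refine ⟨x, funext fun j => ?_, ?_⟩
      · have := hx (Pj m n A j) (Finset.mem_insert.2 (Or.inr
          (Finset.mem_image.2 ⟨j, Finset.mem_univ _, rfl⟩)))
        rw [eval_Pj] at this
        have := sub_eq_zero.1 this
        simpa [Pi.smul_apply, smul_eq_mul] using this
      · have := hx (Qn n) (Finset.mem_insert_self _ _)
        rw [eval_Qn] at this
        exact sub_eq_zero.1 this
  have hEset : E = {l : ℂ | ∃ x : Fin n → ℂ,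
      ∀ g ∈ G, MvPolynomial.eval₂ (Polynomial.evalRingHom l) x g = 0} := Set.ext hG
  rw [hEset]
  exact polyFam_finite_or_cofinite n G
end

section
/- Let A be the complex 2×2×2 tensor whose nonzero entries are a₁₁₁ = a₂₁₁ = a₂₁₂ = 1, so that Ax² = (x₁², x₁² + x₁x₂). If (λ, x) is any eigenpair of A (i.e., x ∈ ℂ² \ {0} and x₁² = λx₁, x₁² + x₁x₂ = λx₂), then λ = 0 and x₁ = 0. In particular, up to equivalence, the only eigenpair of A is λ = 0 with x = (0,1). -/
/-- For the `2×2×2` tensor with `Ax² = (x₁², x₁² + x₁x₂)`: every eigenpair has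
`λ = 0` and `x₁ = 0`, and in particular is equivalent to the eigenpair
`λ = 0`, `x = (0, 1)`. -/
theorem eigenpairs_of_example (lam : ℂ) (x₁ x₂ : ℂ) (hx : ¬(x₁ = 0 ∧ x₂ = 0))
    (h1 : x₁ ^ 2 = lam * x₁) (h2 : x₁ ^ 2 + x₁ * x₂ = lam * x₂) :
    (lam = 0 ∧ x₁ = 0) ∧
      ∃ t : ℂ, t ≠ 0 ∧ t * lam = 0 ∧ t * x₁ = 0 ∧ t * x₂ = 1 := by
  have hx1 : x₁ = 0 := by
    by_contra h
    have hl : x₁ = lam := by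
      have h' : x₁ * (x₁ - lam) = 0 := by linear_combination h1
      rcases mul_eq_zero.mp h' with h'' | h''
      · exact absurd h'' h
      · exact sub_eq_zero.mp h''
    subst hl
    have : x₁ ^ 2 = 0 := by linear_combination h2
    exact h (pow_eq_zero_iff (n := 2) (by norm_num) |>.mp this)
  subst hx1
  have hx2 : x₂ ≠ 0 := fun h => hx ⟨rfl, h⟩
  have hl : lam = 0 := by
    have : lam * x₂ = 0 := by linear_combination -h2
    rcases mul_eq_zero.mp this with h | h
    · exact h
    · exact absurd h hx2
  exact ⟨⟨hl, rfl⟩, x₂⁻¹, inv_ne_zero hx2, by simp [hl], by simp, inv_mul_cancel₀ hx2⟩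
end

section
/- Let m ≥ 3, let f be a homogeneous polynomial of degree m in n variables over ℂ, and let λ ∈ ℂ with λ ≠ 0. Then a point x ∈ ℂⁿ satisfies ∇f(x) = λx and x·x = 1 if and only if x is a singular point of the affine hypersurface defined by g(y) = f(y) − (λ/2)(y·y) − (1/m − 1/2)λ, that is, g(x) = 0 and ∇g(x) = 0. -/
open MvPolynomial

private lemma euler_monomial {n : ℕ} (s : Fin n →₀ ℕ) (a : ℂ) :
    ∑ i, X i * pderiv i (monomial s a) = ((∑ i, s i : ℕ) : ℂ) • monomial s a := by
  have : ∀ i : Fin n, X i * pderiv i (monomial s a) = ((s i : ℕ) : ℂ) • monomial s a := by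
    intro i
    rw [pderiv_monomial]
    by_cases h : s i = 0
    · simp [h]
    · rw [X, monomial_mul, one_mul]
      have hle : Finsupp.single i 1 ≤ s := by
        rw [Finsupp.single_le_iff]
        omega
      rw [add_tsub_cancel_of_le hle]
      rw [smul_monomial, smul_eq_mul, mul_comm]
  rw [Finset.sum_congr rfl (fun i _ => this i), ← Finset.sum_smul]
  push_cast
  rfl

private lemma euler_eval {n m : ℕ} (f : MvPolynomial (Fin n) ℂ) (hf : f.IsHomogeneous m)
    (x : Fin n → ℂ) : ∑ i, x i * eval x (pderiv i f) = (m : ℂ) * eval x f := by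
  have key : ∑ i, X i * pderiv i f = ((m : ℂ)) • f := by
    conv_lhs => rw [← f.support_sum_monomial_coeff]
    conv_rhs => rw [← f.support_sum_monomial_coeff]
    rw [Finset.smul_sum]
    simp_rw [map_sum]
    simp_rw [Finset.mul_sum]
    rw [Finset.sum_comm]
    refine Finset.sum_congr rfl fun s hs => ?_
    rw [euler_monomial]
    congr 2
    have hcoeff : coeff s f ≠ 0 := mem_support_iff.mp hs
    have := hf hcoeff
    rw [← this]
    rw [Finsupp.weight_apply, Finsupp.sum]
    rw [Finset.sum_subset (Finset.subset_univ s.support)]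
    · simp
    · intro i _ hi
      simp [Finsupp.notMem_support_iff.mp hi]
  have := congrArg (eval x) key
  rw [smul_eq_C_mul, eval_mul, eval_C] at this
  rw [← this, map_sum]
  refine Finset.sum_congr rfl fun i _ => ?_
  rw [eval_mul, eval_X]

/-- For `f` homogeneous of degree `m ≥ 3` and `λ ≠ 0`: a point `x` is a normalized
eigenvector with eigenvalue `λ` (i.e. `∇f(x) = λ x` and `x·x = 1`) iff `x` is a
singular point of the affine hypersurface defined by
`g(y) = f(y) - (λ/2)(y·y) - (1/m - 1/2)λ`. -/
theorem normalized_eigenvector_iff_singular (m n : ℕ) (hm : 3 ≤ m)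
    (f : MvPolynomial (Fin n) ℂ) (hf : f.IsHomogeneous m)
    (lam : ℂ) (hlam : lam ≠ 0) (x : Fin n → ℂ) :
    let g : MvPolynomial (Fin n) ℂ :=
      f - C (lam / 2) * ∑ i, X i ^ 2 - C ((1 / (m : ℂ) - 1 / 2) * lam)
    ((∀ i, eval x (pderiv i f) = lam * x i) ∧ ∑ i, x i ^ 2 = 1) ↔
      (eval x g = 0 ∧ ∀ i, eval x (pderiv i g) = 0) := by
  intro g
  have hm0 : (m : ℂ) ≠ 0 := by
    exact_mod_cast Nat.cast_ne_zero.mpr (show m ≠ 0 by omega)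
  have hm2 : (m : ℂ) ≠ 2 := by
    intro h
    have : m = 2 := by exact_mod_cast h
    omega
  -- gradient of g
  have hgrad : ∀ i, eval x (pderiv i g) = eval x (pderiv i f) - lam * x i := by
    intro i
    show eval x (pderiv i (f - C (lam / 2) * ∑ j, X j ^ 2 - C ((1 / (m : ℂ) - 1 / 2) * lam))) = _
    rw [map_sub, map_sub, pderiv_C, map_sub, map_sub]
    rw [pderiv_mul, pderiv_C]
    have hsum : pderiv i (∑ j, X j ^ 2) = (2 : MvPolynomial (Fin n) ℂ) * X i := by
      rw [map_sum]
      rw [Finset.sum_eq_single i]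
      · rw [pderiv_pow, pderiv_X_self]; simp
      · intro j _ hj
        rw [pderiv_pow, pderiv_X_of_ne hj]
        simp
      · simp
    rw [hsum]
    simp only [map_add, map_mul, eval_C, eval_X, map_ofNat, zero_mul, map_zero]
    ring
  -- value of g
  have hval : eval x g = eval x f - lam / 2 * (∑ i, x i ^ 2) - (1 / (m : ℂ) - 1 / 2) * lam := by
    show eval x (f - C (lam / 2) * ∑ j, X j ^ 2 - C ((1 / (m : ℂ) - 1 / 2) * lam)) = _
    simp [map_sub, map_sum]
  constructor
  · rintro ⟨heig, hnorm⟩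
    have heuler := euler_eval f hf x
    have h1 : (m : ℂ) * eval x f = lam := by
      rw [← heuler, Finset.sum_congr rfl (fun i _ => by rw [heig i]; ring : ∀ i ∈ Finset.univ,
        x i * eval x (pderiv i f) = lam * x i ^ 2)]
      rw [← Finset.mul_sum, hnorm, mul_one]
    have hfval : eval x f = lam / m := by
      field_simp
      linear_combination h1
    constructor
    · rw [hval, hnorm, hfval]
      field_simp
      ring
    · intro i
      rw [hgrad i, heig i, sub_self]
  · rintro ⟨hg0, hgrad0⟩
    have heig : ∀ i, eval x (pderiv i f) = lam * x i := by
      intro i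
      have := hgrad0 i
      rw [hgrad i] at this
      linear_combination this
    refine ⟨heig, ?_⟩
    set S := ∑ i, x i ^ 2 with hS
    have heuler := euler_eval f hf x
    have hsum : ∑ i, x i * eval x (pderiv i f) = lam * S := by
      rw [Finset.sum_congr rfl (fun i _ => by rw [heig i])]
      rw [hS, Finset.mul_sum]
      exact Finset.sum_congr rfl fun i _ => by ring
    rw [hsum] at heuler
    rw [hval] at hg0
    -- heuler : lam * S = m * eval x f
    -- hg0 : eval x f - lam/2 * S - (1/m - 1/2) * lam = 0
    have hfval : eval x f = lam / 2 * S + (1 / (m : ℂ) - 1 / 2) * lam := by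
      linear_combination hg0
    rw [hfval] at heuler
    -- lam * S = m * (lam/2 * S + (1/m - 1/2) * lam)
    have hminv : (m : ℂ) * (1 / m) = 1 := by field_simp
    have key : lam * (S - 1) * ((2 : ℂ) - m) = 0 := by
      linear_combination 2 * heuler + 2 * lam * hminv
    rcases mul_eq_zero.mp key with h | h
    · rcases mul_eq_zero.mp h with h' | h'
      · exact absurd h' hlam
      · exact sub_eq_zero.mp h'
    · exact absurd h (sub_ne_zero.mpr (Ne.symm hm2))
end

section
/- Let A be the symmetric complex 3×3×3 tensor with nonzero entries a₁₁₁ = 2 and a₁₂₂ = a₂₁₂ = a₂₂₁ = a₁₃₃ = a₃₁₃ = a₃₃₁ = 1, so that Ax² = (2x₁² + x₂² + x₃², 2x₁x₂, 2x₁x₃). Then: (1) for every α ∈ ℂ, the vector x = (1, iα, α) satisfies Ax² = 2x and x·x = x₁²+x₂²+x₃² = 1, so 2 is a normalized eigenvalue of A; and (2) for every real number r with 0 < r ≤ 2, there exist λ ∈ ℂ and x ∈ ℂ³ with Ax² = λx, ∑ᵢ xᵢ·conj(xᵢ) = 1, and |λ| = r. -/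
open Complex

/-- For the symmetric `3×3×3` tensor with `Ax² = (2x₁² + x₂² + x₃², 2x₁x₂, 2x₁x₃)`:
(1) for every `α ∈ ℂ` the vector `(1, iα, α)` is a normalized eigenvector with
eigenvalue `2`; (2) for every real `0 < r ≤ 2` there is an eigenpair `(λ, x)` with
Hermitian unit norm `∑ xᵢ conj(xᵢ) = 1` and `|λ| = r`. -/
theorem hermitian_eigenvalue_magnitudes :
    (∀ α : ℂ,
      2 * (1 : ℂ) ^ 2 + (I * α) ^ 2 + α ^ 2 = 2 * 1 ∧
      2 * 1 * (I * α) = 2 * (I * α) ∧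
      2 * 1 * α = 2 * α ∧
      (1 : ℂ) ^ 2 + (I * α) ^ 2 + α ^ 2 = 1) ∧
    (∃ x₁ x₂ x₃ : ℂ,
      2 * x₁ ^ 2 + x₂ ^ 2 + x₃ ^ 2 = 2 * x₁ ∧
      2 * x₁ * x₂ = 2 * x₂ ∧
      2 * x₁ * x₃ = 2 * x₃ ∧
      x₁ ^ 2 + x₂ ^ 2 + x₃ ^ 2 = 1) ∧
    (∀ r : ℝ, 0 < r → r ≤ 2 →
      ∃ (lam : ℂ) (x₁ x₂ x₃ : ℂ),
        2 * x₁ ^ 2 + x₂ ^ 2 + x₃ ^ 2 = lam * x₁ ∧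
        2 * x₁ * x₂ = lam * x₂ ∧
        2 * x₁ * x₃ = lam * x₃ ∧
        x₁ * (starRingEnd ℂ) x₁ + x₂ * (starRingEnd ℂ) x₂ + x₃ * (starRingEnd ℂ) x₃ = 1 ∧
        ‖lam‖ = r) := by
  refine ⟨fun α => ⟨?_, ?_, ?_, ?_⟩, ⟨1, 0, 0, by ring, by ring, by ring, by ring⟩, ?_⟩
  · have : (I : ℂ) ^ 2 = -1 := I_sq
    ring_nf
    rw [I_sq]; ring
  · ring
  · ring
  · ring_nf
    rw [I_sq]; ring
  · intro r hr hr2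
    set s : ℝ := Real.sqrt ((1 - r ^ 2 / 4) / 2) with hs
    have hsnn : (0:ℝ) ≤ (1 - r ^ 2 / 4) / 2 := by nlinarith
    have hssq : s ^ 2 = (1 - r ^ 2 / 4) / 2 := Real.sq_sqrt hsnn
    refine ⟨(r : ℂ), (r / 2 : ℂ), (s : ℂ), I * (s : ℂ), ?_, by ring, by ring, ?_, ?_⟩
    · ring_nf; rw [I_sq]; ring
    · have h1 : (starRingEnd ℂ) ((r:ℂ)/2) = (r:ℂ)/2 := by
        rw [map_div₀, Complex.conj_ofReal, Complex.conj_ofNat]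
      have h2 : (starRingEnd ℂ) ((s:ℂ)) = (s:ℂ) := Complex.conj_ofReal s
      have h3 : (starRingEnd ℂ) (I * (s:ℂ)) = -I * (s:ℂ) := by
        simp [Complex.conj_ofReal]
      rw [h1, h2, h3]
      have : ((r:ℂ)/2) * ((r:ℂ)/2) + (s:ℂ) * (s:ℂ) + (I * (s:ℂ)) * (-I * (s:ℂ))
          = (r:ℂ)^2/4 + 2 * (s:ℂ)^2 := by
        have : (I:ℂ)^2 = -1 := I_sq
        ring_nf
        rw [I_sq]; ring
      rw [this]
      have : ((s:ℂ))^2 = (((1 - r ^ 2 / 4) / 2 : ℝ) : ℂ) := by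
        norm_cast
      rw [this]
      push_cast
      ring
    · simpa using abs_of_pos hr
end

section
/- Let f(x,y,z) = z⁶ + x⁴y² + x²y⁴ − 3x²y²z², the Motzkin polynomial, viewed as a homogeneous polynomial of degree 6 in 3 variables over ℂ. Then the set of normalized eigenvalues {λ ∈ ℂ : there exists v ∈ ℂ³ with ∇f(v) = λv and v·v = 1} equals {0, 3/32, 3/2, 6}. In particular all normalized eigenvalues are real and non-negative. -/
open MvPolynomial

/-- The Motzkin polynomial `z⁶ + x⁴y² + x²y⁴ − 3x²y²z²` as a polynomial in the
variables `X 0 = x`, `X 1 = y`, `X 2 = z` over `ℂ`. -/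
noncomputable def motzkin : MvPolynomial (Fin 3) ℂ :=
  X 2 ^ 6 + X 0 ^ 4 * X 1 ^ 2 + X 0 ^ 2 * X 1 ^ 4 - 3 * X 0 ^ 2 * X 1 ^ 2 * X 2 ^ 2

lemma three_eq' : (3 : MvPolynomial (Fin 3) ℂ) = C 3 := by rw [map_ofNat]

lemma d0 (v : Fin 3 → ℂ) :
    eval v (pderiv 0 motzkin) = 4*(v 0)^3*(v 1)^2 + 2*(v 0)*(v 1)^4 - 6*(v 0)*(v 1)^2*(v 2)^2 := by
  simp [motzkin, three_eq', pderiv_X, Pi.single_apply]; ring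

lemma d1 (v : Fin 3 → ℂ) :
    eval v (pderiv 1 motzkin) = 2*(v 0)^4*(v 1) + 4*(v 0)^2*(v 1)^3 - 6*(v 0)^2*(v 1)*(v 2)^2 := by
  simp [motzkin, three_eq', pderiv_X, Pi.single_apply]; ring

lemma d2 (v : Fin 3 → ℂ) :
    eval v (pderiv 2 motzkin) = 6*(v 2)^5 - 6*(v 0)^2*(v 1)^2*(v 2) := by
  simp [motzkin, three_eq', pderiv_X, Pi.single_apply]; ring

lemma mem_of_xyz (lam x y z : ℂ)
    (h0 : 4*x^3*y^2 + 2*x*y^4 - 6*x*y^2*z^2 = lam*x)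
    (h1 : 2*x^4*y + 4*x^2*y^3 - 6*x^2*y*z^2 = lam*y)
    (h2 : 6*z^5 - 6*x^2*y^2*z = lam*z)
    (hn : x^2 + y^2 + z^2 = 1) :
    ∃ v : Fin 3 → ℂ,
        (∀ i, eval v (pderiv i motzkin) = lam * v i) ∧ ∑ i, v i ^ 2 = 1 := by
  refine ⟨![x, y, z], fun i => ?_, ?_⟩
  · fin_cases i
    · show eval ![x, y, z] (pderiv 0 motzkin) = lam * (![x, y, z] 0)
      rw [d0]; simpa using h0
    · show eval ![x, y, z] (pderiv 1 motzkin) = lam * (![x, y, z] 1)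
      rw [d1]; simpa using h1
    · show eval ![x, y, z] (pderiv 2 motzkin) = lam * (![x, y, z] 2)
      rw [d2]; simpa using h2
  · simpa [Fin.sum_univ_three] using hn

lemma back0 : ∃ v : Fin 3 → ℂ,
    (∀ i, eval v (pderiv i motzkin) = 0 * v i) ∧ ∑ i, v i ^ 2 = 1 := by
  apply mem_of_xyz 0 1 0 0 <;> ring

lemma back6 : ∃ v : Fin 3 → ℂ,
    (∀ i, eval v (pderiv i motzkin) = 6 * v i) ∧ ∑ i, v i ^ 2 = 1 := by
  apply mem_of_xyz 6 0 0 1 <;> ring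

lemma back32 : ∃ v : Fin 3 → ℂ,
    (∀ i, eval v (pderiv i motzkin) = (3/2) * v i) ∧ ∑ i, v i ^ 2 = 1 := by
  set xR : ℝ := Real.sqrt (1/2) with hxR
  have hx2 : ((xR : ℂ))^2 = 1/2 := by
    have h : xR^2 = 1/2 := Real.sq_sqrt (by norm_num)
    calc ((xR:ℂ))^2 = ((xR^2 : ℝ) : ℂ) := by push_cast; ring
      _ = 1/2 := by rw [h]; norm_num
  apply mem_of_xyz (3/2) (xR:ℂ) (xR:ℂ) 0
  · linear_combination (6*(xR:ℂ)*((xR:ℂ)^2 + 1/2))*hx2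
  · linear_combination (6*(xR:ℂ)*((xR:ℂ)^2 + 1/2))*hx2
  · ring
  · linear_combination 2*hx2

lemma back332 : ∃ v : Fin 3 → ℂ,
    (∀ i, eval v (pderiv i motzkin) = (3/32) * v i) ∧ ∑ i, v i ^ 2 = 1 := by
  set sR : ℝ := Real.sqrt (3/8) with hsR
  have hs2 : sR^2 = 3/8 := Real.sq_sqrt (by norm_num)
  have hsle : sR ≤ 3/4 := by
    nlinarith [Real.sqrt_nonneg (3/8 : ℝ)]
  have hsnn : 0 ≤ sR := Real.sqrt_nonneg _
  set xR : ℝ := Real.sqrt ((3/4 + sR)/2) with hxR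
  set yR : ℝ := Real.sqrt ((3/4 - sR)/2) with hyR
  have hx2 : xR^2 = (3/4 + sR)/2 := Real.sq_sqrt (by linarith)
  have hy2 : yR^2 = (3/4 - sR)/2 := Real.sq_sqrt (by linarith)
  have hsum : ((xR:ℂ))^2 + ((yR:ℂ))^2 = 3/4 := by
    have h : xR^2 + yR^2 = 3/4 := by rw [hx2, hy2]; ring
    calc ((xR:ℂ))^2 + ((yR:ℂ))^2 = ((xR^2 + yR^2 : ℝ) : ℂ) := by push_cast; ring
      _ = 3/4 := by rw [h]; norm_num
  have hxy : ((xR:ℂ))^2 * ((yR:ℂ))^2 = 3/64 := by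
    have h : xR^2 * yR^2 = 3/64 := by rw [hx2, hy2]; nlinarith [hs2]
    calc ((xR:ℂ))^2 * ((yR:ℂ))^2 = ((xR^2 * yR^2 : ℝ) : ℂ) := by push_cast; ring
      _ = 3/64 := by rw [h]; norm_num
  apply mem_of_xyz (3/32) (xR:ℂ) (yR:ℂ) (1/2)
  · linear_combination (2*(xR:ℂ)*(yR:ℂ)^2)*hsum + 2*(xR:ℂ)*hxy
  · linear_combination (2*(xR:ℂ)^2*(yR:ℂ))*hsum + 2*(yR:ℂ)*hxy
  · linear_combination -3*hxy
  · linear_combination hsum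

lemma forward (lam x y z : ℂ)
    (h0 : 4*x^3*y^2 + 2*x*y^4 - 6*x*y^2*z^2 = lam*x)
    (h1 : 2*x^4*y + 4*x^2*y^3 - 6*x^2*y*z^2 = lam*y)
    (h2 : 6*z^5 - 6*x^2*y^2*z = lam*z)
    (hn : x^2 + y^2 + z^2 = 1) :
    lam = 0 ∨ lam = 3/32 ∨ lam = 3/2 ∨ lam = 6 := by
  by_cases hx : x = 0
  · by_cases hy : y = 0
    · subst hx; subst hy
      have hz2 : z^2 = 1 := by linear_combination hn
      have hz : z ≠ 0 := by intro h; rw [h] at hz2; norm_num at hz2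
      right; right; right
      have e2 : 6*z^4 = lam := by
        apply mul_right_cancel₀ hz; linear_combination h2
      linear_combination -e2 + 6*(z^2+1)*hz2
    · left
      subst hx
      have : lam * y = 0 := by linear_combination -h1
      rcases mul_eq_zero.mp this with h | h
      · exact h
      · exact absurd h hy
  · by_cases hy : y = 0
    · left
      subst hy
      have : lam * x = 0 := by linear_combination -h0
      rcases mul_eq_zero.mp this with h | h
      · exact h
      · exact absurd h hx
    · have e0 : 4*x^2*y^2 + 2*y^4 - 6*y^2*z^2 = lam := by
        apply mul_right_cancel₀ hx; linear_combination h0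
      have e1 : 2*x^4 + 4*x^2*y^2 - 6*x^2*z^2 = lam := by
        apply mul_right_cancel₀ hy; linear_combination h1
      have key : (y^2 - x^2) * (2*(x^2 + y^2 - 3*z^2)) = 0 := by
        linear_combination e0 - e1
      rcases mul_eq_zero.mp key with hA | hB
      · have hy2 : y^2 = x^2 := by linear_combination hA
        have hlam : lam = 6*x^4 - 6*x^2*z^2 := by
          linear_combination 4*x^2*hy2 - e1
        by_cases hz : z = 0
        · subst hz
          right; right; left
          have hx2 : x^2 = 1/2 := by linear_combination (hn - hy2)/2
          linear_combination hlam + (6*x^2+3)*hx2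
        · have e2 : 6*z^4 - 6*x^2*y^2 = lam := by
            apply mul_right_cancel₀ hz; linear_combination h2
          have key2 : (z^2 - x^2) * (6*z^2 + 12*x^2) = 0 := by
            linear_combination e2 + hlam + 6*x^2*hy2
          rcases mul_eq_zero.mp key2 with hC | hD
          · left
            linear_combination hlam - 6*x^2*hC
          · exfalso
            have : (1:ℂ) = 0 := by linear_combination (1/6)*hD - hn + hy2
            exact one_ne_zero this
      · have hB' : x^2 + y^2 - 3*z^2 = 0 := by linear_combination hB/2
        have hz2 : z^2 = 1/4 := by linear_combination (hn - hB')/4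
        have hz : z ≠ 0 := by intro h; rw [h] at hz2; norm_num at hz2
        have e2 : 6*z^4 - 6*x^2*y^2 = lam := by
          apply mul_right_cancel₀ hz; linear_combination h2
        have hlam : lam = 2*x^2*y^2 := by linear_combination 2*x^2*hB' - e1
        have hxy : x^2*y^2 = 3/64 := by
          linear_combination (-(1/8))*e2 - (1/8)*hlam + (3/4)*(z^2+1/4)*hz2
        right; left
        linear_combination hlam + 2*hxy


/-- The set of normalized eigenvalues of the symmetric tensor corresponding to
the Motzkin polynomial is `{0, 3/32, 3/2, 6}`; in particular all normalized
eigenvalues are real and non-negative. -/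
theorem motzkin_normalized_eigenvalues :
    {lam : ℂ | ∃ v : Fin 3 → ℂ,
        (∀ i, eval v (pderiv i motzkin) = lam * v i) ∧ ∑ i, v i ^ 2 = 1}
      = {0, 3 / 32, 3 / 2, 6} ∧
    ∀ lam ∈ {lam : ℂ | ∃ v : Fin 3 → ℂ,
        (∀ i, eval v (pderiv i motzkin) = lam * v i) ∧ ∑ i, v i ^ 2 = 1},
      lam.im = 0 ∧ 0 ≤ lam.re := by
  have hset : {lam : ℂ | ∃ v : Fin 3 → ℂ,
      (∀ i, eval v (pderiv i motzkin) = lam * v i) ∧ ∑ i, v i ^ 2 = 1}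
      = {0, 3 / 32, 3 / 2, 6} := by
    ext lam
    simp only [Set.mem_setOf_eq, Set.mem_insert_iff, Set.mem_singleton_iff]
    constructor
    · rintro ⟨v, hv, hn⟩
      have h0 := hv 0; rw [d0] at h0
      have h1 := hv 1; rw [d1] at h1
      have h2 := hv 2; rw [d2] at h2
      exact forward lam (v 0) (v 1) (v 2) h0 h1 h2
        (by simpa [Fin.sum_univ_three] using hn)
    · rintro (rfl | rfl | rfl | rfl)
      exacts [back0, back332, back32, back6]
  refine ⟨hset, ?_⟩
  intro lam hmem
  rw [hset] at hmem
  simp only [Set.mem_insert_iff, Set.mem_singleton_iff] at hmem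
  rcases hmem with rfl | rfl | rfl | rfl <;>
    constructor <;> norm_num
end

section
/- Let a, b be real numbers, not both zero, and consider the 2×2×2 tensor A over ℂ with Ax² = (a(x₁² + x₂²), b(x₁² + x₂²)). Then every normalized eigenpair of A, i.e., every (λ, x) ∈ ℂ × ℂ² with Ax² = λx and x₁² + x₂² = 1, satisfies λ² = a² + b² and x = (a/λ, b/λ). In particular, A has only finitely many normalized eigenvalues. -/
/-- For real `a, b` not both zero and the `2×2×2` tensor with
`Ax² = (a(x₁²+x₂²), b(x₁²+x₂²))`: every normalized eigenpair `(λ, x)` satisfies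
`λ² = a² + b²` and `x = (a/λ, b/λ)`; in particular the set of normalized
eigenvalues is finite. -/
theorem singular_tensor_finitely_many_normalized_eigenvalues
    (a b : ℝ) (hab : ¬(a = 0 ∧ b = 0)) :
    (∀ (lam x₁ x₂ : ℂ),
      (a : ℂ) * (x₁ ^ 2 + x₂ ^ 2) = lam * x₁ →
      (b : ℂ) * (x₁ ^ 2 + x₂ ^ 2) = lam * x₂ →
      x₁ ^ 2 + x₂ ^ 2 = 1 →
      lam ^ 2 = (a : ℂ) ^ 2 + (b : ℂ) ^ 2 ∧ x₁ = (a : ℂ) / lam ∧ x₂ = (b : ℂ) / lam) ∧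
    {lam : ℂ | ∃ x₁ x₂ : ℂ,
        (a : ℂ) * (x₁ ^ 2 + x₂ ^ 2) = lam * x₁ ∧
        (b : ℂ) * (x₁ ^ 2 + x₂ ^ 2) = lam * x₂ ∧
        x₁ ^ 2 + x₂ ^ 2 = 1}.Finite := by
  have hk : (a : ℂ) ^ 2 + (b : ℂ) ^ 2 ≠ 0 := by
    intro h
    have ha : (a : ℂ).im = 0 := by simp
    have : a ^ 2 + b ^ 2 = 0 := by
      have h' : ((a ^ 2 + b ^ 2 : ℝ) : ℂ) = 0 := by push_cast; linear_combination h
      exact_mod_cast h'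
    have ha0 : a = 0 := by nlinarith [sq_nonneg a, sq_nonneg b]
    have hb0 : b = 0 := by nlinarith [sq_nonneg a, sq_nonneg b]
    exact hab ⟨ha0, hb0⟩
  have key : ∀ (lam x₁ x₂ : ℂ),
      (a : ℂ) * (x₁ ^ 2 + x₂ ^ 2) = lam * x₁ →
      (b : ℂ) * (x₁ ^ 2 + x₂ ^ 2) = lam * x₂ →
      x₁ ^ 2 + x₂ ^ 2 = 1 →
      lam ^ 2 = (a : ℂ) ^ 2 + (b : ℂ) ^ 2 ∧ x₁ = (a : ℂ) / lam ∧ x₂ = (b : ℂ) / lam := by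
    intro lam x₁ x₂ h1 h2 hn
    rw [hn, mul_one] at h1 h2
    have hsq : lam ^ 2 = (a : ℂ) ^ 2 + (b : ℂ) ^ 2 := by
      have : lam ^ 2 * (x₁ ^ 2 + x₂ ^ 2) = (a : ℂ) ^ 2 + (b : ℂ) ^ 2 := by
        rw [h1, h2] at *; ring
      rwa [hn, mul_one] at this
    have hlam : lam ≠ 0 := by
      intro h0; rw [h0] at hsq; simp at hsq; exact hk hsq.symm
    exact ⟨hsq, by field_simp [h1]; linear_combination h1.symm, by field_simp [h2]; linear_combination h2.symm⟩
  refine ⟨key, ?_⟩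
  obtain ⟨w, hw⟩ : ∃ w : ℂ, w ^ 2 = (a : ℂ) ^ 2 + (b : ℂ) ^ 2 := by
    exact IsAlgClosed.exists_pow_nat_eq ((a : ℂ) ^ 2 + (b : ℂ) ^ 2) (n := 2) zero_lt_two
  apply Set.Finite.subset ((Set.finite_singleton (-w)).insert w)
  rintro lam ⟨x₁, x₂, h1, h2, hn⟩
  obtain ⟨hsq, -, -⟩ := key lam x₁ x₂ h1 h2 hn
  have h3 : (lam - w) * (lam + w) = 0 := by
    have : lam ^ 2 - w ^ 2 = 0 := by rw [hsq, hw]; ring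
    linear_combination this
  rcases mul_eq_zero.mp h3 with h | h
  · simp only [Set.mem_insert_iff, Set.mem_singleton_iff]
    left; linear_combination h
  · simp only [Set.mem_insert_iff, Set.mem_singleton_iff]
    right; linear_combination h
end
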